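/- Every α-EDS set function on an n-element set V is α^{n+2}(n³+2n)-approximable by a Generalised Min-Cut instance: there exist a superadditive set function f on V and a graph cut function g on V such that f(X)+g(X) ≤ γ(X) ≤ α^{n+2}(n³+2n)·(f(X)+g(X)) for all X ⊆ V. -/

import Mathlib

namespace Stmt13Aux

abbrev M := WithTop NNRat

variable {V : Type*} [Fintype V] [DecidableEq V]

/-- minimum of γ over sets separating u and v -/
noncomputable def sVal (γ : Finset V → M) (u v : V) : M :=
  (Finset.univ.filter (fun T : Finset V => (u ∈ T ∧ v ∉ T) ∨ (v ∈ T ∧ u ∉ T))).inf γ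

lemma sVal_comm (γ : Finset V → M) (u v : V) : sVal γ u v = sVal γ v u := by
  unfold sVal
  congr 1
  ext T
  simp only [Finset.mem_filter]
  tauto

lemma sVal_le (γ : Finset V → M) {u v : V} {T : Finset V}
    (h : (u ∈ T ∧ v ∉ T) ∨ (v ∈ T ∧ u ∉ T)) : sVal γ u v ≤ γ T :=
  Finset.inf_le (by simp [h])

lemma sVal_exists (γ : Finset V → M) {u v : V} (h : u ≠ v) :
    ∃ T : Finset V, ((u ∈ T ∧ v ∉ T) ∨ (v ∈ T ∧ u ∉ T)) ∧ γ T = sVal γ u v := by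
  have hne : (Finset.univ.filter
      (fun T : Finset V => (u ∈ T ∧ v ∉ T) ∨ (v ∈ T ∧ u ∉ T))).Nonempty := by
    refine ⟨{u}, ?_⟩
    simp [h.symm]
  obtain ⟨T, hT, hT2⟩ := Finset.exists_mem_eq_inf _ hne γ
  exact ⟨T, by simpa using hT, hT2.symm⟩

/-- min over supersets of weighted γ -/
noncomputable def MVal (γ : Finset V → M) (X : Finset V) : M :=
  (Finset.univ.filter (fun Z : Finset V => X ⊆ Z)).inf
    (fun Z => ((Z.card ^ 2 + 2 : ℕ) : M) * γ Z)

lemma MVal_le (γ : Finset V → M) {X Z : Finset V} (h : X ⊆ Z) :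
    MVal γ X ≤ ((Z.card ^ 2 + 2 : ℕ) : M) * γ Z :=
  Finset.inf_le (by simp [h])

lemma MVal_mono (γ : Finset V → M) {X Y : Finset V} (h : X ⊆ Y) :
    MVal γ X ≤ MVal γ Y := by
  have hsub : (Finset.univ.filter (fun Z : Finset V => Y ⊆ Z)) ⊆
      (Finset.univ.filter (fun Z : Finset V => X ⊆ Z)) := by
    intro Z hZ
    simp only [Finset.mem_filter, Finset.mem_univ, true_and] at *
    exact h.trans hZ
  exact Finset.inf_mono (α := M) (f := fun Z => ((Z.card ^ 2 + 2 : ℕ) : M) * γ Z) hsub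

lemma MVal_exists (γ : Finset V → M) (X : Finset V) :
    ∃ Z : Finset V, X ⊆ Z ∧ MVal γ X = ((Z.card ^ 2 + 2 : ℕ) : M) * γ Z := by
  have hne : (Finset.univ.filter (fun Z : Finset V => X ⊆ Z)).Nonempty :=
    ⟨Finset.univ, by simp⟩
  obtain ⟨Z, hZ, h2⟩ := Finset.exists_mem_eq_inf _ hne (fun Z : Finset V => ((Z.card ^ 2 + 2 : ℕ) : M) * γ Z)
  exact ⟨Z, by simpa using hZ, h2⟩


lemma one_le_alpha_pow {α : NNRat} (hα : 1 ≤ α) (m : ℕ) : (1 : M) ≤ (α : M) ^ m :=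
  one_le_pow_of_one_le' (by exact_mod_cast hα : (1:M) ≤ (α:M)) m

lemma chain (γ : Finset V → M) {α : NNRat} (hα : 1 ≤ α)
    (hEDS : ∀ X Y : Finset V, γ (X \ Y) ≤ (α : M) * (γ X + γ Y))
    {ι : Type*} [DecidableEq ι] (F : Finset ι) (g : ι → Finset V) (S : Finset V) :
    γ (S \ F.biUnion g) ≤ (α : M) ^ F.card * (γ S + ∑ i ∈ F, γ (g i)) := by
  classical
  induction F using Finset.induction_on generalizing S with
  | empty => simp
  | @insert a F ha ih =>
      have hset : S \ (insert a F).biUnion g = (S \ F.biUnion g) \ g a := by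
        rw [Finset.biUnion_insert]
        ext x
        simp only [Finset.mem_sdiff, Finset.mem_union]
        tauto
      rw [hset]
      calc γ ((S \ F.biUnion g) \ g a)
          ≤ (α : M) * (γ (S \ F.biUnion g) + γ (g a)) := hEDS _ _
        _ ≤ (α : M) * ((α : M) ^ F.card * (γ S + ∑ i ∈ F, γ (g i))
              + (α : M) ^ F.card * γ (g a)) := by
            refine mul_le_mul_right (add_le_add (ih S) ?_) _
            exact le_mul_of_one_le_left' (one_le_alpha_pow hα F.card)
        _ = (α : M) ^ (insert a F).card * (γ S + ∑ i ∈ insert a F, γ (g i)) := by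
            rw [Finset.card_insert_of_notMem ha, Finset.sum_insert ha, pow_succ]
            ring
  
lemma main (γ : Finset V → M) {α : NNRat} (hα : 1 ≤ α)
    (hEDS : ∀ X Y : Finset V, γ (X \ Y) ≤ (α : M) * (γ X + γ Y))
    (X Z : Finset V) (hXZ : X ⊆ Z) :
    γ X ≤ (α : M) ^ (Fintype.card V + 2) *
      (((Z.card ^ 2 + 2 : ℕ) : M) * γ Z
        + ((Fintype.card V + 1 : ℕ) : M) * ∑ v ∈ Z \ X, ∑ u ∈ X, sVal γ u v) := by
  classical
  set n := Fintype.card V with hn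
  by_cases hZX : Z \ X = ∅
  · -- X = Z
    have hXZ' : X = Z := Finset.Subset.antisymm hXZ (Finset.sdiff_eq_empty_iff_subset.mp hZX)
    subst hXZ'
    calc γ X ≤ ((X.card ^ 2 + 2 : ℕ) : M) * γ X := by
          refine le_mul_of_one_le_left' ?_
          exact_mod_cast Nat.one_le_iff_ne_zero.mpr (by omega)
      _ ≤ ((X.card ^ 2 + 2 : ℕ) : M) * γ X
            + ((n + 1 : ℕ) : M) * ∑ v ∈ X \ X, ∑ u ∈ X, sVal γ u v := le_self_add
      _ ≤ _ := le_mul_of_one_le_left' (one_le_alpha_pow hα _)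
  · -- Z \ X nonempty
    have hXn : X.card + 1 ≤ n := by
      obtain ⟨v0, hv0⟩ := Finset.nonempty_iff_ne_empty.mpr hZX
      have hv0X : v0 ∉ X := (Finset.mem_sdiff.mp hv0).2
      calc X.card + 1 = (insert v0 X).card := (Finset.card_insert_of_notMem hv0X).symm
        _ ≤ n := Finset.card_le_univ _
    set x := X.card with hx
    set k := (Z \ X).card with hk
    have hkx : k + x = Z.card := by
      rw [hk, hx, Finset.card_sdiff_of_subset hXZ]
      have := Finset.card_le_card hXZ
      omega
    have hZn : Z.card ≤ n := Finset.card_le_univ _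
    -- minimizing separators
    set Sm : V → V → Finset V := fun u v =>
      if h : u ≠ v then (sVal_exists γ h).choose else ∅ with hSmdef
    have hSmP : ∀ u v : V, u ≠ v →
        ((u ∈ Sm u v ∧ v ∉ Sm u v) ∨ (v ∈ Sm u v ∧ u ∉ Sm u v)) := by
      intro u v h
      simp only [hSmdef, dif_pos h]
      exact (sVal_exists γ h).choose_spec.1
    have hSmγ : ∀ u v : V, u ≠ v → γ (Sm u v) = sVal γ u v := by
      intro u v h
      simp only [hSmdef, dif_pos h]
      exact (sVal_exists γ h).choose_spec.2
    set A : V → Finset V := fun v => X.filter (fun u => v ∈ Sm u v) with hA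
    set base : V → Finset V := fun v => if h : (A v).Nonempty then Sm h.choose v else Z
      with hbase
    set D : V → V → Finset V := fun v u =>
      if v ∈ Sm u v then base v \ Sm u v else Sm u v with hD
    set T : V → Finset V := fun v => base v \ X.biUnion (fun u => D v u) with hT
    -- facts for v ∈ Z \ X
    have huv : ∀ v ∈ Z \ X, ∀ u ∈ X, u ≠ v := by
      intro v hv u hu h
      exact (Finset.mem_sdiff.mp hv).2 (h ▸ hu)
    have fact1 : ∀ v ∈ Z \ X, v ∈ base v := by
      intro v hv
      simp only [hbase]
      by_cases h : (A v).Nonempty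
      · rw [dif_pos h]
        exact (Finset.mem_filter.mp h.choose_spec).2
      · rw [dif_neg h]
        exact (Finset.mem_sdiff.mp hv).1
    have fact2 : ∀ v ∈ Z \ X, γ (base v) ≤ γ Z + ∑ u ∈ X, sVal γ u v := by
      intro v hv
      simp only [hbase]
      by_cases h : (A v).Nonempty
      · rw [dif_pos h]
        have hcX : h.choose ∈ X := (Finset.mem_filter.mp h.choose_spec).1
        have : γ (Sm h.choose v) = sVal γ h.choose v := hSmγ _ _ (huv v hv _ hcX)
        rw [this]
        refine le_trans ?_ le_add_self
        exact Finset.single_le_sum (f := fun u => sVal γ u v) (fun i _ => zero_le) hcX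
      · rw [dif_neg h]
        exact le_self_add
    have fact3 : ∀ v ∈ Z \ X, ∀ u ∈ X, γ (D v u) ≤ (α : M) * (γ (base v) + sVal γ u v) := by
      intro v hv u hu
      have hne := huv v hv u hu
      simp only [hD]
      by_cases h : v ∈ Sm u v
      · rw [if_pos h]
        have := hEDS (base v) (Sm u v)
        rwa [hSmγ u v hne] at this
      · rw [if_neg h]
        rw [← hSmγ u v hne] at *
        refine le_trans le_add_self (le_mul_of_one_le_left' ?_)
        exact_mod_cast hα
    have fact4 : ∀ v ∈ Z \ X, v ∈ T v := by
      intro v hv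
      simp only [hT]
      rw [Finset.mem_sdiff]
      refine ⟨fact1 v hv, ?_⟩
      intro hmem
      obtain ⟨u, hu, hDu⟩ := Finset.mem_biUnion.mp hmem
      simp only [hD] at hDu
      by_cases h : v ∈ Sm u v
      · rw [if_pos h] at hDu
        exact (Finset.mem_sdiff.mp hDu).2 h
      · rw [if_neg h] at hDu
        exact h hDu
    have fact5 : ∀ v ∈ Z \ X, ∀ u ∈ X, u ∉ T v := by
      intro v hv u hu hmem
      simp only [hT] at hmem
      rw [Finset.mem_sdiff] at hmem
      obtain ⟨hub, hnb⟩ := hmem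
      refine hnb (Finset.mem_biUnion.mpr ⟨u, hu, ?_⟩)
      have hne := huv v hv u hu
      simp only [hD]
      by_cases h : v ∈ Sm u v
      · rw [if_pos h, Finset.mem_sdiff]
        refine ⟨hub, ?_⟩
        rcases hSmP u v hne with ⟨_, hv2⟩ | ⟨_, hu2⟩
        · exact absurd h hv2
        · exact hu2
      · rw [if_neg h]
        rcases hSmP u v hne with ⟨hu2, _⟩ | ⟨hv2, _⟩
        · exact hu2
        · exact absurd hv2 h
    -- bound on γ (T v)
    have fact6 : ∀ v ∈ Z \ X, γ (T v) ≤ (α : M) ^ (x + 1) *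
        (((x + 1 : ℕ) : M) * γ Z + ((x + 2 : ℕ) : M) * ∑ u ∈ X, sVal γ u v) := by
      intro v hv
      set Bv := ∑ u ∈ X, sVal γ u v with hBv
      have h1 : γ (T v) ≤ (α : M) ^ x * (γ (base v) + ∑ u ∈ X, γ (D v u)) := by
        simp only [hT]
        exact chain γ hα hEDS X (fun u => D v u) (base v)
      have h2 : ∑ u ∈ X, γ (D v u) ≤ (α : M) * ((x : M) * γ (base v) + Bv) := by
        calc ∑ u ∈ X, γ (D v u) ≤ ∑ u ∈ X, (α : M) * (γ (base v) + sVal γ u v) :=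
              Finset.sum_le_sum (fact3 v hv)
          _ = (α : M) * ((x : M) * γ (base v) + Bv) := by
              rw [← Finset.mul_sum, Finset.sum_add_distrib, Finset.sum_const, nsmul_eq_mul,
                hBv]
      have h3 : γ (base v) + ∑ u ∈ X, γ (D v u) ≤
          (α : M) * (((x + 1 : ℕ) : M) * γ (base v) + Bv) := by
        calc γ (base v) + ∑ u ∈ X, γ (D v u)
            ≤ (α : M) * γ (base v) + (α : M) * ((x : M) * γ (base v) + Bv) := by
              refine add_le_add ?_ h2
              exact le_mul_of_one_le_left' (by exact_mod_cast hα)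
          _ = (α : M) * (((x + 1 : ℕ) : M) * γ (base v) + Bv) := by
              push_cast
              ring
      have h4 : ((x + 1 : ℕ) : M) * γ (base v) + Bv ≤
          ((x + 1 : ℕ) : M) * γ Z + ((x + 2 : ℕ) : M) * Bv := by
        calc ((x + 1 : ℕ) : M) * γ (base v) + Bv
            ≤ ((x + 1 : ℕ) : M) * (γ Z + Bv) + Bv := by
              exact add_le_add_left (mul_le_mul_right (fact2 v hv) _) _
          _ = ((x + 1 : ℕ) : M) * γ Z + ((x + 2 : ℕ) : M) * Bv := by
              push_cast
              ring
      calc γ (T v) ≤ (α : M) ^ x * (γ (base v) + ∑ u ∈ X, γ (D v u)) := h1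
        _ ≤ (α : M) ^ x * ((α : M) * (((x + 1 : ℕ) : M) * γ (base v) + Bv)) :=
            mul_le_mul_right h3 _
        _ ≤ (α : M) ^ x * ((α : M) * (((x + 1 : ℕ) : M) * γ Z + ((x + 2 : ℕ) : M) * Bv)) :=
            mul_le_mul_right (mul_le_mul_right h4 _) _
        _ = (α : M) ^ (x + 1) * (((x + 1 : ℕ) : M) * γ Z + ((x + 2 : ℕ) : M) * Bv) := by
            rw [pow_succ]
            ring
    -- X is obtained from Z by removing the T v
    have hXeq : X = Z \ (Z \ X).biUnion T := by
      ext y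
      simp only [Finset.mem_sdiff, Finset.mem_biUnion, not_exists, not_and]
      constructor
      · intro hy
        refine ⟨hXZ hy, ?_⟩
        intro v hv
        exact fun hyT => fact5 v (Finset.mem_sdiff.mpr hv) y hy hyT
      · rintro ⟨hyZ, hyT⟩
        by_contra hyX
        have hy' : y ∈ Z \ X := Finset.mem_sdiff.mpr ⟨hyZ, hyX⟩
        exact hyT y (Finset.mem_sdiff.mp hy') (fact4 y hy')
    -- final computation
    have hchain : γ X ≤ (α : M) ^ k * (γ Z + ∑ v ∈ Z \ X, γ (T v)) := by
      conv_lhs => rw [hXeq]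
      exact chain γ hα hEDS (Z \ X) T Z
    have hsum : ∑ v ∈ Z \ X, γ (T v) ≤ (α : M) ^ (x + 1) *
        (((k * (x + 1) : ℕ) : M) * γ Z
          + ((x + 2 : ℕ) : M) * ∑ v ∈ Z \ X, ∑ u ∈ X, sVal γ u v) := by
      calc ∑ v ∈ Z \ X, γ (T v)
          ≤ ∑ v ∈ Z \ X, (α : M) ^ (x + 1) *
            (((x + 1 : ℕ) : M) * γ Z + ((x + 2 : ℕ) : M) * ∑ u ∈ X, sVal γ u v) :=
            Finset.sum_le_sum fact6
        _ = (α : M) ^ (x + 1) * (((k * (x + 1) : ℕ) : M) * γ Z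
            + ((x + 2 : ℕ) : M) * ∑ v ∈ Z \ X, ∑ u ∈ X, sVal γ u v) := by
            rw [← Finset.mul_sum, Finset.sum_add_distrib, Finset.sum_const, ← Finset.mul_sum,
              nsmul_eq_mul, ← hk]
            push_cast
            ring
    have hfinal : γ X ≤ (α : M) ^ (k + x + 1) *
        (((1 + k * (x + 1) : ℕ) : M) * γ Z
          + ((x + 2 : ℕ) : M) * ∑ v ∈ Z \ X, ∑ u ∈ X, sVal γ u v) := by
      calc γ X ≤ (α : M) ^ k * (γ Z + ∑ v ∈ Z \ X, γ (T v)) := hchain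
        _ ≤ (α : M) ^ k * ((α : M) ^ (x + 1) * γ Z + (α : M) ^ (x + 1) *
              (((k * (x + 1) : ℕ) : M) * γ Z
                + ((x + 2 : ℕ) : M) * ∑ v ∈ Z \ X, ∑ u ∈ X, sVal γ u v)) := by
            refine mul_le_mul_right (add_le_add ?_ hsum) _
            exact le_mul_of_one_le_left' (one_le_alpha_pow hα _)
        _ = (α : M) ^ (k + x + 1) *
            (((1 + k * (x + 1) : ℕ) : M) * γ Z
              + ((x + 2 : ℕ) : M) * ∑ v ∈ Z \ X, ∑ u ∈ X, sVal γ u v) := by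
            rw [pow_add, pow_succ]
            push_cast
            ring
    refine hfinal.trans ?_
    have hexp : (α : M) ^ (k + x + 1) ≤ (α : M) ^ (n + 2) :=
      pow_le_pow_right' (by exact_mod_cast hα) (by omega)
    have hc1 : ((1 + k * (x + 1) : ℕ) : M) ≤ ((Z.card ^ 2 + 2 : ℕ) : M) := by
      have : 1 + k * (x + 1) ≤ Z.card ^ 2 + 2 := by
        rw [← hkx]
        have hkk : k ≤ k * k + 1 := by nlinarith
        nlinarith [hkk]
      exact_mod_cast this
    have hc2 : ((x + 2 : ℕ) : M) ≤ ((n + 1 : ℕ) : M) := by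
      exact_mod_cast (by omega : x + 2 ≤ n + 1)
    exact mul_le_mul' hexp (add_le_add (mul_le_mul_left hc1 _) (mul_le_mul_left hc2 _))

end Stmt13Aux

open Stmt13Aux

/-- Every `α`-EDS set function `γ` on an `n`-element set `V` is
`α^{n+2}·(n³+2n)`-approximable by a Generalised Min-Cut instance: there are a
superadditive set function `f` and symmetric edge weights `w` (with cut function
`g(X) = Σ_{u ∈ X, v ∉ X} w(u,v)`) such that
`f(X)+g(X) ≤ γ(X) ≤ α^{n+2}(n³+2n)·(f(X)+g(X))` for all `X ⊆ V`. -/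
theorem stmt13 {V : Type*} [Fintype V] [DecidableEq V]
    (γ : Finset V → WithTop NNRat) (h0 : γ ∅ = 0)
    (α : NNRat) (hα : 1 ≤ α)
    (hEDS : ∀ X Y : Finset V, γ (X \ Y) ≤ (α : WithTop NNRat) * (γ X + γ Y)) :
    ∃ (f : Finset V → WithTop NNRat) (w : V → V → WithTop NNRat),
      f ∅ = 0 ∧
      (∀ A B : Finset V, Disjoint A B → f A + f B ≤ f (A ∪ B)) ∧
      (∀ u v, w u v = w v u) ∧
      (∀ X : Finset V,
        f X + ∑ u ∈ X, ∑ v ∈ Xᶜ, w u v ≤ γ X ∧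
        γ X ≤ (α : WithTop NNRat) ^ (Fintype.card V + 2) *
          ((Fintype.card V ^ 3 + 2 * Fintype.card V : ℕ) : WithTop NNRat) *
          (f X + ∑ u ∈ X, ∑ v ∈ Xᶜ, w u v)) := by
  classical
  set n := Fintype.card V with hn
  set C : ℕ := n ^ 3 + 2 * n with hCdef
  set c : NNRat := ((C : ℕ) : NNRat)⁻¹ with hcdef
  set f : Finset V → M := fun X => (X.card : M) * ((c : M) * MVal γ X) with hf
  set w : V → V → M := fun u v => ((n + 1 : ℕ) : M) * ((c : M) * sVal γ u v) with hw
  have hCcast : ∀ hC0 : C ≠ 0, ((C : ℕ) : M) * ((c : NNRat) : M) = 1 := by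
    intro hC0
    have h1 : ((C : ℕ) : M) = (((C : ℕ) : NNRat) : M) := by push_cast; ring
    rw [h1, hcdef, ← WithTop.coe_mul, mul_inv_cancel₀ (by exact_mod_cast hC0),
      WithTop.coe_one]
  refine ⟨f, w, ?_, ?_, ?_, ?_⟩
  · simp [hf]
  · -- superadditivity
    intro A B hAB
    simp only [hf]
    have hcard : ((A ∪ B).card : M) = (A.card : M) + (B.card : M) := by
      rw [Finset.card_union_of_disjoint hAB]
      push_cast
      ring
    rw [hcard, add_mul]
    refine add_le_add ?_ ?_
    · exact mul_le_mul_right (mul_le_mul_right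
        (MVal_mono γ Finset.subset_union_left) _) _
    · exact mul_le_mul_right (mul_le_mul_right
        (MVal_mono γ Finset.subset_union_right) _) _
  · -- symmetry
    intro u v
    simp only [hw, sVal_comm γ u v]
  · intro X
    constructor
    · -- lower bound
      by_cases hX : X = ∅
      · subst hX
        simp [hf, h0]
      · have hC0 : C ≠ 0 := by
          obtain ⟨v0, _⟩ := Finset.nonempty_iff_ne_empty.mpr hX
          have : 1 ≤ n := by
            have : 0 < Fintype.card V := Fintype.card_pos_iff.mpr ⟨v0⟩
            omega
          rw [hCdef]
          omega
        set K : ℕ := X.card * (X.card ^ 2 + 2) + X.card * Xᶜ.card * (n + 1) with hK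
        have h1 : f X ≤ ((X.card * (X.card ^ 2 + 2) : ℕ) : M) * ((c : M) * γ X) := by
          simp only [hf]
          calc (X.card : M) * ((c : M) * MVal γ X)
              ≤ (X.card : M) * ((c : M) * (((X.card ^ 2 + 2 : ℕ) : M) * γ X)) :=
                mul_le_mul_right (mul_le_mul_right (MVal_le γ (Finset.Subset.refl X)) _) _
            _ = ((X.card * (X.card ^ 2 + 2) : ℕ) : M) * ((c : M) * γ X) := by
                push_cast
                ring
        have h2 : ∑ u ∈ X, ∑ v ∈ Xᶜ, w u v ≤
            ((X.card * Xᶜ.card * (n + 1) : ℕ) : M) * ((c : M) * γ X) := by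
          have hb : ∀ u ∈ X, ∀ v ∈ Xᶜ, w u v ≤ ((n + 1 : ℕ) : M) * ((c : M) * γ X) := by
            intro u hu v hv
            simp only [hw]
            refine mul_le_mul_right (mul_le_mul_right ?_ _) _
            exact sVal_le γ (Or.inl ⟨hu, Finset.mem_compl.mp hv⟩)
          calc ∑ u ∈ X, ∑ v ∈ Xᶜ, w u v
              ≤ ∑ u ∈ X, ∑ v ∈ Xᶜ, ((n + 1 : ℕ) : M) * ((c : M) * γ X) := by
                refine Finset.sum_le_sum (fun u hu => Finset.sum_le_sum (fun v hv => ?_))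
                exact hb u hu v hv
            _ = ((X.card * Xᶜ.card * (n + 1) : ℕ) : M) * ((c : M) * γ X) := by
                rw [Finset.sum_const, Finset.sum_const, nsmul_eq_mul, nsmul_eq_mul]
                push_cast
                ring
        have hKC : K ≤ C := by
          have hcc : X.card + Xᶜ.card = n := by
            rw [hn, ← Finset.card_add_card_compl X]
          set a := X.card
          set b := Xᶜ.card
          rw [hK, hCdef, ← hcc]
          have hkey : a * b ≤ 2 * (a * b * b) + b * b * b + 2 * b := by
            rcases Nat.eq_zero_or_pos b with hb | hb
            · simp [hb]
            · calc a * b = a * b * 1 := by ring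
                _ ≤ a * b * b := Nat.mul_le_mul_left _ hb
                _ ≤ 2 * (a * b * b) + b * b * b + 2 * b := by nlinarith [Nat.zero_le (a*b*b), Nat.zero_le (b*b*b)]
          nlinarith [hkey]
        calc f X + ∑ u ∈ X, ∑ v ∈ Xᶜ, w u v
            ≤ ((X.card * (X.card ^ 2 + 2) : ℕ) : M) * ((c : M) * γ X)
              + ((X.card * Xᶜ.card * (n + 1) : ℕ) : M) * ((c : M) * γ X) :=
              add_le_add h1 h2
          _ = ((K : ℕ) : M) * ((c : M) * γ X) := by
              rw [hK]
              push_cast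
              ring
          _ ≤ ((C : ℕ) : M) * ((c : M) * γ X) :=
              mul_le_mul_left (by exact_mod_cast hKC) _
          _ = (((C : ℕ) : M) * ((c : NNRat) : M)) * γ X := by ring
          _ = 1 * γ X := by rw [hCcast hC0]
          _ = γ X := one_mul _
    · -- upper bound
      by_cases hX : X = ∅
      · subst hX
        rw [h0]
        exact zero_le
      · have hXne : X.Nonempty := Finset.nonempty_iff_ne_empty.mpr hX
        have hC0 : C ≠ 0 := by
          obtain ⟨v0, _⟩ := hXne
          have : 0 < Fintype.card V := Fintype.card_pos_iff.mpr ⟨v0⟩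
          rw [hCdef]
          omega
        obtain ⟨Zs, hZs1, hZs2⟩ := MVal_exists γ X
        set S : M := ∑ u ∈ X, ∑ v ∈ Xᶜ, sVal γ u v with hS
        have hmain : γ X ≤ (α : M) ^ (n + 2) * (MVal γ X + ((n + 1 : ℕ) : M) * S) := by
          have h1 := main γ hα hEDS X Zs hZs1
          rw [← hZs2] at h1
          refine h1.trans (mul_le_mul_right (add_le_add_right (mul_le_mul_right ?_ _) _) _)
          rw [Finset.sum_comm, hS]
          refine Finset.sum_le_sum (fun u hu => ?_)
          refine Finset.sum_le_sum_of_subset_of_nonneg ?_ (fun _ _ _ => zero_le)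
          intro v hv
          exact Finset.mem_compl.mpr (Finset.mem_sdiff.mp hv).2
        have hfg : MVal γ X + ((n + 1 : ℕ) : M) * S ≤
            ((C : ℕ) : M) * (f X + ∑ u ∈ X, ∑ v ∈ Xᶜ, w u v) := by
          have hgeq : ∑ u ∈ X, ∑ v ∈ Xᶜ, w u v = ((n + 1 : ℕ) : M) * ((c : M) * S) := by
            rw [hS, Finset.mul_sum, Finset.mul_sum]
            refine Finset.sum_congr rfl (fun u hu => ?_)
            rw [Finset.mul_sum, Finset.mul_sum]
          have hfge : (c : M) * MVal γ X ≤ f X := by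
            simp only [hf]
            refine le_mul_of_one_le_left' ?_
            have : 1 ≤ X.card := Finset.card_pos.mpr hXne
            exact_mod_cast this
          calc MVal γ X + ((n + 1 : ℕ) : M) * S
              = (((C : ℕ) : M) * ((c : NNRat) : M)) * MVal γ X
                + ((n + 1 : ℕ) : M) * ((((C : ℕ) : M) * ((c : NNRat) : M)) * S) := by
                rw [hCcast hC0, one_mul, one_mul]
            _ = ((C : ℕ) : M) * ((c : M) * MVal γ X
                + ((n + 1 : ℕ) : M) * ((c : M) * S)) := by ring
            _ ≤ ((C : ℕ) : M) * (f X + ∑ u ∈ X, ∑ v ∈ Xᶜ, w u v) := by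
                rw [hgeq]
                exact mul_le_mul_right (add_le_add_left hfge _) _
        calc γ X ≤ (α : M) ^ (n + 2) * (MVal γ X + ((n + 1 : ℕ) : M) * S) := hmain
          _ ≤ (α : M) ^ (n + 2) *
              (((C : ℕ) : M) * (f X + ∑ u ∈ X, ∑ v ∈ Xᶜ, w u v)) :=
              mul_le_mul_right hfg _
          _ = (α : M) ^ (n + 2) * ((C : ℕ) : M) *
              (f X + ∑ u ∈ X, ∑ v ∈ Xᶜ, w u v) := by
              rw [mul_assoc]
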